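/- With Ω, T, p, q as above and the mixed-model sequence distributions M(x, y, z) for strings z over the alphabet {P, Q}, for every input x and every 1 ≤ t ≤ T: E_t(x) = sup over all functions δ : Ω^t → [−1/2, 1/2] (extended by δ(y) = 0 for sequences y of length ≠ t) of { E_{y∼M(x, ∅, Q^{t−1}P)}[δ(y)] − E_{y∼M(x, ∅, Q^t)}[δ(y)] }, where E_t(x) = E_{y∼q_{≤T}(·|x)}[ 1{t ≤ |y|} · D_TVD(p(·|x,y_{<t}), q(·|x,y_{<t})) ]. -/

import Mathlib

open Finset

/-- Total variation distance between two distributions on a finite set. -/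
noncomputable def tvd {Ω : Type*} [Fintype Ω] (P Q : Ω → ℝ) : ℝ :=
  (1 / 2) * ∑ c, |P c - Q c|

/-- `IsDist P`: `P` is a probability distribution on the finite set `Ω`. -/
def IsDist {Ω : Type*} [Fintype Ω] (P : Ω → ℝ) : Prop :=
  (∀ c, 0 ≤ P c) ∧ ∑ c, P c = 1

/-- A next-token model: for every input `x` and every prefix, a next-token distribution. -/
def IsModel {Ω ι : Type*} [Fintype Ω] (p : ι → List Ω → Ω → ℝ) : Prop :=
  ∀ x pre, IsDist (p x pre)

/-- `Stopped eos T y`: `y` is a completed output sequence for horizon `T`: it is nonempty,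
has length at most `T`, contains the end-of-sequence token at no position except possibly
the last one, and either ends with `eos` or has length exactly `T`. -/
def Stopped {Ω : Type*} [DecidableEq Ω] (eos : Ω) (T : ℕ) (y : List Ω) : Prop :=
  y ≠ [] ∧ y.length ≤ T ∧ eos ∉ y.dropLast ∧ (y.getLast? = some eos ∨ y.length = T)

open Classical in
/-- Probability that autoregressive sampling — where the next-token distribution used to
sample the `(t+1)`-st token given the length-`t` prefix `pre` is `ms t pre`, with horizon `T`
and end-of-sequence token `eos` — outputs exactly the sequence `y`. -/
noncomputable def seqProb {Ω : Type*} [Fintype Ω] [DecidableEq Ω] (eos : Ω)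
    (ms : ℕ → List Ω → Ω → ℝ) (T : ℕ) (y : List Ω) : ℝ :=
  if Stopped eos T y then ∏ t ∈ Finset.range y.length, ms t (y.take t) (y.getD t eos) else 0

/-- Expectation of `f` under the induced distribution over output sequences. -/
noncomputable def seqExp {Ω : Type*} [Fintype Ω] [DecidableEq Ω] (eos : Ω)
    (ms : ℕ → List Ω → Ω → ℝ) (T : ℕ) (f : List Ω → ℝ) : ℝ :=
  ∑ n ∈ Finset.Icc 1 T, ∑ v : Fin n → Ω, seqProb eos ms T (List.ofFn v) * f (List.ofFn v)

/-- Expectation under `p_{≤T}(·|x)`, the output-sequence distribution of the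
autoregressive model with next-token distributions `p`. -/
noncomputable def modelExp {Ω ι : Type*} [Fintype Ω] [DecidableEq Ω] (eos : Ω)
    (p : ι → List Ω → Ω → ℝ) (x : ι) (T : ℕ) (f : List Ω → ℝ) : ℝ :=
  seqExp eos (fun _ pre => p x pre) T f

/-- Expectation under the mixed-model sequence distribution `M(x, ∅, z)`, where the letter
`z_t` (`true` = letter `P`, i.e. target model `p`; `false` = letter `Q`, i.e. draft model `q`)
selects the model used to sample the `t`-th token, with horizon `|z|` and empty prefix. -/
noncomputable def mixExp {Ω ι : Type*} [Fintype Ω] [DecidableEq Ω] (eos : Ω)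
    (p q : ι → List Ω → Ω → ℝ) (x : ι) (z : List Bool) (f : List Ω → ℝ) : ℝ :=
  seqExp eos (fun t pre => if z.getD t true then p x pre else q x pre) z.length f

/-- `Σ_{t=1}^{|y|} D_TVD(p(·|x, y_{<t}), q(·|x, y_{<t}))`. -/
noncomputable def totalLoss {Ω ι : Type*} [Fintype Ω] (p q : ι → List Ω → Ω → ℝ)
    (x : ι) (y : List Ω) : ℝ :=
  ∑ t ∈ Finset.range y.length, tvd (p x (y.take t)) (q x (y.take t))

/-- `1{t ≤ |y|} · D_TVD(p(·|x, y_{<t}), q(·|x, y_{<t}))` for a (1-indexed) position `t`. -/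
noncomputable def stepLoss {Ω ι : Type*} [Fintype Ω] (p q : ι → List Ω → Ω → ℝ)
    (x : ι) (t : ℕ) (y : List Ω) : ℝ :=
  if t ≤ y.length then tvd (p x (y.take (t - 1))) (q x (y.take (t - 1))) else 0

/-- Expected output length `L_p(x) = E_{y∼p_{≤T}(·|x)}[|y|]` of the target model. -/
noncomputable def Lp {Ω ι : Type*} [Fintype Ω] [DecidableEq Ω] (eos : Ω)
    (p : ι → List Ω → Ω → ℝ) (x : ι) (T : ℕ) : ℝ :=
  modelExp eos p x T (fun y => (y.length : ℝ))

/-- Sequence-level acceptance rate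
`α(x) = 1 − E_{y∼p_{≤T}(·|x)}[Σ_{t=1}^{|y|} D_TVD(p(·|x,y_{<t}), q(·|x,y_{<t}))] / L_p(x)`. -/
noncomputable def acceptRate {Ω ι : Type*} [Fintype Ω] [DecidableEq Ω] (eos : Ω)
    (p q : ι → List Ω → Ω → ℝ) (x : ι) (T : ℕ) : ℝ :=
  1 - modelExp eos p x T (totalLoss p q x) / Lp eos p x T

/-- On-policy distillation loss
`ε(x) = E_{y∼q_{≤T}(·|x)}[(1/|y|) Σ_{t=1}^{|y|} D_TVD(p(·|x,y_{<t}), q(·|x,y_{<t}))]`. -/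
noncomputable def onPolicyLoss {Ω ι : Type*} [Fintype Ω] [DecidableEq Ω] (eos : Ω)
    (p q : ι → List Ω → Ω → ℝ) (x : ι) (T : ℕ) : ℝ :=
  modelExp eos q x T (fun y => (1 / (y.length : ℝ)) * totalLoss p q x y)

/-- `A_t(x) = E_{y∼p_{≤T}(·|x)}[1{t ≤ |y|} · D_TVD(p(·|x,y_{<t}), q(·|x,y_{<t}))]`. -/
noncomputable def Aterm {Ω ι : Type*} [Fintype Ω] [DecidableEq Ω] (eos : Ω)
    (p q : ι → List Ω → Ω → ℝ) (x : ι) (T t : ℕ) : ℝ :=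
  modelExp eos p x T (stepLoss p q x t)

/-- `E_t(x) = E_{y∼q_{≤T}(·|x)}[1{t ≤ |y|} · D_TVD(p(·|x,y_{<t}), q(·|x,y_{<t}))]`. -/
noncomputable def Eterm {Ω ι : Type*} [Fintype Ω] [DecidableEq Ω] (eos : Ω)
    (p q : ι → List Ω → Ω → ℝ) (x : ι) (T t : ℕ) : ℝ :=
  modelExp eos q x T (stepLoss p q x t)

section Aux

open Classical in
/-- Probability of an `eos`-free prefix. -/
noncomputable def pref {Ω : Type*} [Fintype Ω] [DecidableEq Ω] (eos : Ω)
    (ms : ℕ → List Ω → Ω → ℝ) (u : List Ω) : ℝ :=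
  if eos ∉ u then ∏ s ∈ Finset.range u.length, ms s (u.take s) (u.getD s eos) else 0

set_option linter.unusedSectionVars false

variable {Ω : Type*} [Fintype Ω] [DecidableEq Ω] (eos : Ω)

lemma ofFn_snoc' {m : ℕ} (w : Fin m → Ω) (c : Ω) :
    List.ofFn (Fin.snoc w c) = List.ofFn w ++ [c] := by
  rw [List.ofFn_succ']
  simp [List.concat_eq_append]

lemma sum_snoc' {m : ℕ} (F : (Fin (m + 1) → Ω) → ℝ) :
    ∑ v, F v = ∑ w : Fin m → Ω, ∑ c, F (Fin.snoc w c) := by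
  rw [← (Fin.snocEquiv (fun _ => Ω)).sum_comp F, Fintype.sum_prod_type, Finset.sum_comm]
  rfl

lemma prod_concat' (ms : ℕ → List Ω → Ω → ℝ) (u : List Ω) (c : Ω) :
    ∏ s ∈ Finset.range (u.length + 1), ms s ((u ++ [c]).take s) ((u ++ [c]).getD s eos)
      = (∏ s ∈ Finset.range u.length, ms s (u.take s) (u.getD s eos)) * ms u.length u c := by
  rw [Finset.prod_range_succ]
  congr 1
  · refine Finset.prod_congr rfl fun s hs => ?_
    rw [Finset.mem_range] at hs
    rw [List.take_append_of_le_length hs.le, List.getD_append _ _ _ _ hs]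
  · rw [List.take_left, List.getD_append_right _ _ _ _ le_rfl]
    simp

lemma stopped_concat (T : ℕ) (u : List Ω) (c : Ω) :
    Stopped eos T (u ++ [c]) ↔ eos ∉ u ∧ (u.length + 1 ≤ T ∧ (c = eos ∨ u.length + 1 = T)) := by
  unfold Stopped
  simp only [List.dropLast_concat, List.getLast?_concat, List.length_append,
    List.length_singleton, Option.some_inj]
  constructor
  · rintro ⟨-, h2, h3, h4⟩; exact ⟨h3, h2, by tauto⟩
  · rintro ⟨h3, h2, h4⟩; exact ⟨by simp, h2, h3, by tauto⟩

lemma seqProb_concat (ms : ℕ → List Ω → Ω → ℝ) (T : ℕ) (u : List Ω) (c : Ω) :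
    seqProb eos ms T (u ++ [c]) =
      if u.length + 1 ≤ T ∧ (c = eos ∨ u.length + 1 = T)
      then pref eos ms u * ms u.length u c else 0 := by
  classical
  unfold seqProb pref
  by_cases he : eos ∉ u
  · by_cases hg : u.length + 1 ≤ T ∧ (c = eos ∨ u.length + 1 = T)
    · rw [if_pos ((stopped_concat eos T u c).2 ⟨he, hg⟩), if_pos hg, if_pos he]
      have hl : (u ++ [c]).length = u.length + 1 := by simp
      rw [hl, prod_concat']
    · rw [if_neg (fun hs => hg ((stopped_concat eos T u c).1 hs).2), if_neg hg]
  · rw [if_neg (fun hs => he ((stopped_concat eos T u c).1 hs).1)]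
    rw [if_neg he]
    simp

lemma pref_concat (ms : ℕ → List Ω → Ω → ℝ) (u : List Ω) (c : Ω) :
    pref eos ms (u ++ [c]) = if c = eos then 0 else pref eos ms u * ms u.length u c := by
  classical
  unfold pref
  by_cases hc : c = eos
  · subst hc
    rw [if_pos rfl, if_neg (by simp)]
  · by_cases he : eos ∉ u
    · have hne : eos ∉ u ++ [c] := by
        simp only [List.mem_append, List.mem_singleton]
        rintro (h | h)
        · exact he h
        · exact hc h.symm
      rw [if_pos hne, if_neg hc, if_pos he]
      have hl : (u ++ [c]).length = u.length + 1 := by simp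
      rw [hl, prod_concat']
    · rw [if_neg (not_not_intro (List.mem_append_left _ (not_not.1 he))), if_neg hc, if_neg he]
      ring

lemma pref_nonneg (ms : ℕ → List Ω → Ω → ℝ) (hms : ∀ s u, IsDist (ms s u)) (u : List Ω) :
    0 ≤ pref eos ms u := by
  unfold pref
  split
  · exact Finset.prod_nonneg fun s _ => (hms s _).1 _
  · exact le_rfl

lemma pref_congr (ms ms' : ℕ → List Ω → Ω → ℝ) (u : List Ω)
    (h : ∀ s < u.length, ∀ a, ms s (u.take s) a = ms' s (u.take s) a) :
    pref eos ms u = pref eos ms' u := by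
  unfold pref
  split
  · exact Finset.prod_congr rfl fun s hs => h s (Finset.mem_range.1 hs) _
  · rfl

end Aux

section Aux2
set_option linter.unusedSectionVars false
open Classical
variable {Ω : Type*} [Fintype Ω] [DecidableEq Ω] (eos : Ω)

lemma marginal (ms : ℕ → List Ω → Ω → ℝ) (hms : ∀ s u, IsDist (ms s u)) (T : ℕ) :
    ∀ d m, m + 1 + d = T → ∀ (h : List Ω → ℝ),
    (∑ n ∈ Finset.Icc 1 T, ∑ v : Fin n → Ω,
        seqProb eos ms T (List.ofFn v) * (if m + 1 ≤ n then h ((List.ofFn v).take m) else 0))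
    = ∑ w : Fin m → Ω, pref eos ms (List.ofFn w) * h (List.ofFn w) := by
  intro d
  induction d with
  | zero =>
    intro m htT h
    have hTm : T = m + 1 := by omega
    subst hTm
    rw [Finset.sum_eq_single_of_mem (m + 1) (by simp [Finset.mem_Icc])]
    · simp only [le_refl, if_true, ite_true]
      rw [sum_snoc']
      refine Finset.sum_congr rfl fun w _ => ?_
      have hu : (List.ofFn w).length = m := List.length_ofFn
      have key : ∀ c : Ω, seqProb eos ms (m + 1) (List.ofFn (Fin.snoc w c))
            * h ((List.ofFn (Fin.snoc w c)).take m)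
          = pref eos ms (List.ofFn w) * ms m (List.ofFn w) c * h (List.ofFn w) := by
        intro c
        rw [ofFn_snoc', List.take_left' hu, seqProb_concat, hu,
          if_pos ⟨le_rfl, Or.inr rfl⟩]
      simp only [key]
      rw [← Finset.sum_mul, ← Finset.mul_sum, (hms m (List.ofFn w)).2, mul_one]
    · intro n hn hne
      rw [Finset.mem_Icc] at hn
      refine Finset.sum_eq_zero fun v _ => ?_
      rw [if_neg (by omega), mul_zero]
  | succ d ih =>
    intro m htT h
    have htlt : m + 1 < T := by omega
    have hsplit : ∀ (n : ℕ) (v : Fin n → Ω),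
        seqProb eos ms T (List.ofFn v) * (if m + 1 ≤ n then h ((List.ofFn v).take m) else 0)
        = seqProb eos ms T (List.ofFn v) * (if n = m + 1 then h ((List.ofFn v).take m) else 0)
          + seqProb eos ms T (List.ofFn v) * (if m + 2 ≤ n then h ((List.ofFn v).take m) else 0) := by
      intro n v
      rcases Nat.lt_trichotomy n (m + 1) with H | H | H
      · rw [if_neg (by omega), if_neg (by omega), if_neg (by omega)]; ring
      · rw [if_pos (by omega), if_pos (by omega), if_neg (by omega)]; ring
      · rw [if_pos (by omega), if_neg (by omega), if_pos (by omega)]; ring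
    simp only [hsplit, Finset.sum_add_distrib]
    have hB := ih (m + 1) (by omega) (fun u => h (u.take m))
    have hBeq : (∑ n ∈ Finset.Icc 1 T, ∑ v : Fin n → Ω,
        seqProb eos ms T (List.ofFn v) * (if m + 2 ≤ n then h ((List.ofFn v).take m) else 0))
        = ∑ w : Fin (m + 1) → Ω, pref eos ms (List.ofFn w) * h ((List.ofFn w).take m) := by
      rw [← hB]
      refine Finset.sum_congr rfl fun n _ => Finset.sum_congr rfl fun v _ => ?_
      congr 1
      by_cases hn2 : m + 2 ≤ n
      · rw [if_pos hn2, if_pos (by omega : m + 1 + 1 ≤ n), List.take_take,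
          min_eq_left (by omega : m ≤ m + 1)]
      · rw [if_neg hn2, if_neg (by omega : ¬ (m + 1 + 1 ≤ n))]
    rw [hBeq]
    have hAeq : (∑ n ∈ Finset.Icc 1 T, ∑ v : Fin n → Ω,
        seqProb eos ms T (List.ofFn v) * (if n = m + 1 then h ((List.ofFn v).take m) else 0))
        = ∑ w : Fin m → Ω, pref eos ms (List.ofFn w) * ms m (List.ofFn w) eos * h (List.ofFn w) := by
      rw [Finset.sum_eq_single_of_mem (m + 1) (by rw [Finset.mem_Icc]; omega)]
      · simp only [if_pos rfl, if_true]
        rw [sum_snoc']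
        refine Finset.sum_congr rfl fun w _ => ?_
        have hu : (List.ofFn w).length = m := List.length_ofFn
        have key : ∀ c : Ω, seqProb eos ms T (List.ofFn (Fin.snoc w c))
              * h ((List.ofFn (Fin.snoc w c)).take m)
            = (if c = eos then pref eos ms (List.ofFn w) * ms m (List.ofFn w) c else 0)
                * h (List.ofFn w) := by
          intro c
          rw [ofFn_snoc', List.take_left' hu, seqProb_concat, hu]
          by_cases hc : c = eos
          · rw [if_pos ⟨by omega, Or.inl hc⟩, if_pos hc]
          · rw [if_neg ?_, if_neg hc, zero_mul]
            rintro ⟨-, hc' | hl⟩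
            · exact hc hc'
            · omega
        simp only [key]
        rw [← Finset.sum_mul, Finset.sum_ite_eq' Finset.univ eos
          (fun c => pref eos ms (List.ofFn w) * ms m (List.ofFn w) c), if_pos (Finset.mem_univ _)]
      · intro n hn hne
        refine Finset.sum_eq_zero fun v _ => ?_
        rw [if_neg hne, mul_zero]
    rw [hAeq]
    have hB2 : (∑ w : Fin (m + 1) → Ω, pref eos ms (List.ofFn w) * h ((List.ofFn w).take m))
        = ∑ w : Fin m → Ω, pref eos ms (List.ofFn w) * (1 - ms m (List.ofFn w) eos)
            * h (List.ofFn w) := by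
      rw [sum_snoc']
      refine Finset.sum_congr rfl fun w _ => ?_
      have hu : (List.ofFn w).length = m := List.length_ofFn
      have key : ∀ c : Ω, pref eos ms (List.ofFn (Fin.snoc w c))
            * h ((List.ofFn (Fin.snoc w c)).take m)
          = (if c = eos then 0 else pref eos ms (List.ofFn w) * ms m (List.ofFn w) c)
              * h (List.ofFn w) := by
        intro c
        rw [ofFn_snoc', List.take_left' hu, pref_concat, hu]
      simp only [key]
      rw [← Finset.sum_mul]
      congr 1
      have hsub : ∀ c : Ω, (if c = eos then 0 else pref eos ms (List.ofFn w) * ms m (List.ofFn w) c)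
          = pref eos ms (List.ofFn w) * ms m (List.ofFn w) c
            - (if c = eos then pref eos ms (List.ofFn w) * ms m (List.ofFn w) c else 0) := by
        intro c; split <;> ring
      simp only [hsub]
      rw [Finset.sum_sub_distrib, ← Finset.mul_sum, (hms m (List.ofFn w)).2,
        Finset.sum_ite_eq' Finset.univ eos
          (fun c => pref eos ms (List.ofFn w) * ms m (List.ofFn w) c), if_pos (Finset.mem_univ _)]
      ring
    rw [hB2, ← Finset.sum_add_distrib]
    exact Finset.sum_congr rfl fun w _ => by ring

end Aux2

section Aux3
set_option linter.unusedSectionVars false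
open Classical
variable {Ω : Type*} [Fintype Ω] [DecidableEq Ω] (eos : Ω)

lemma getD_replicate' (m s : ℕ) (b d : Bool) (h : s < m) :
    (List.replicate m b).getD s d = b := by
  rw [List.getD_eq_getElem?_getD, List.getElem?_replicate, if_pos h]
  rfl

lemma seqExp_single (ms : ℕ → List Ω → Ω → ℝ) (m : ℕ) (δ : List Ω → ℝ)
    (hδ : ∀ y : List Ω, y.length ≠ m + 1 → δ y = 0) :
    seqExp eos ms (m + 1) δ
      = ∑ w : Fin m → Ω, ∑ c, seqProb eos ms (m + 1) (List.ofFn w ++ [c])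
          * δ (List.ofFn w ++ [c]) := by
  unfold seqExp
  rw [Finset.sum_eq_single_of_mem (m + 1) (by simp [Finset.mem_Icc])]
  · rw [sum_snoc']
    exact Finset.sum_congr rfl fun w _ => Finset.sum_congr rfl fun c _ => by rw [ofFn_snoc']
  · intro n hn hne
    refine Finset.sum_eq_zero fun v _ => ?_
    rw [hδ _ (by simp [hne]), mul_zero]

end Aux3

/-- **DistillSpec, Lemma 3 (variational form of `E_t`).** For `1 ≤ t ≤ T`,
`E_t(x) = sup_{δ : Ω^t → [−1/2,1/2]} { E_{y∼M(x,∅,Q^{t−1}P)}[δ(y)] − E_{y∼M(x,∅,Qᵗ)}[δ(y)] }`,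
where `δ` is extended by `0` to sequences of length `≠ t`. -/
theorem Eterm_variational
    {Ω ι : Type*} [Fintype Ω] [DecidableEq Ω] (eos : Ω)
    (T : ℕ) (hT : 1 ≤ T)
    (p q : ι → List Ω → Ω → ℝ) (hp : IsModel p) (hq : IsModel q)
    (x : ι) (t : ℕ) (ht1 : 1 ≤ t) (ht2 : t ≤ T) :
    Eterm eos p q x T t = sSup { r : ℝ | ∃ δ : List Ω → ℝ,
      (∀ y, δ y ∈ Set.Icc (-(1 / 2) : ℝ) (1 / 2)) ∧
      (∀ y : List Ω, y.length ≠ t → δ y = 0) ∧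
      r = mixExp eos p q x (List.replicate (t - 1) false ++ [true]) δ
        - mixExp eos p q x (List.replicate t false) δ } := by
  classical
  obtain ⟨m, rfl⟩ := Nat.exists_eq_succ_of_ne_zero (by omega : t ≠ 0)
  simp only [Nat.succ_eq_add_one, Nat.add_sub_cancel]
  have hmsq : ∀ (s : ℕ) (u : List Ω), IsDist ((fun (_ : ℕ) pre => q x pre) s u) :=
    fun _ u => hq x u
  have hpref : ∀ u : List Ω, 0 ≤ pref eos (fun _ pre => q x pre) u :=
    pref_nonneg eos _ hmsq
  -- getD facts
  have hgP : ∀ s < m, (List.replicate m false ++ [true]).getD s true = false := by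
    intro s hs
    rw [List.getD_append _ _ _ s (by simpa using hs)]
    exact getD_replicate' m s false true hs
  have hgPm : (List.replicate m false ++ [true]).getD m true = true := by
    rw [List.getD_append_right _ _ _ _ (by simp)]
    simp
  have hgQ : ∀ s < m + 1, (List.replicate (m + 1) false).getD s true = false :=
    fun s hs => getD_replicate' (m + 1) s false true hs
  -- seqProb computations for the two mixed models on length-(m+1) sequences
  have hP : ∀ (w : Fin m → Ω) (c : Ω),
      seqProb eos (fun s pre => if (List.replicate m false ++ [true]).getD s true
          then p x pre else q x pre) (m + 1) (List.ofFn w ++ [c])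
        = pref eos (fun _ pre => q x pre) (List.ofFn w) * p x (List.ofFn w) c := by
    intro w c
    have hu : (List.ofFn w).length = m := List.length_ofFn
    rw [seqProb_concat, hu, if_pos ⟨le_rfl, Or.inr rfl⟩,
      pref_congr eos _ (fun _ pre => q x pre) (List.ofFn w)
        (fun s hs a => by simp only [hgP s (hu ▸ hs)]; simp)]
    simp only [hgPm]
    simp
  have hQ : ∀ (w : Fin m → Ω) (c : Ω),
      seqProb eos (fun s pre => if (List.replicate (m + 1) false).getD s true
          then p x pre else q x pre) (m + 1) (List.ofFn w ++ [c])
        = pref eos (fun _ pre => q x pre) (List.ofFn w) * q x (List.ofFn w) c := by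
    intro w c
    have hu : (List.ofFn w).length = m := List.length_ofFn
    rw [seqProb_concat, hu, if_pos ⟨le_rfl, Or.inr rfl⟩,
      pref_congr eos _ (fun _ pre => q x pre) (List.ofFn w)
        (fun s hs a => by simp only [hgQ s (by omega : s < m + 1)]; simp)]
    simp only [hgQ m (by omega)]
    simp
  -- the difference of mixed expectations
  have hmixdiff : ∀ δ : List Ω → ℝ, (∀ y : List Ω, y.length ≠ m + 1 → δ y = 0) →
      mixExp eos p q x (List.replicate m false ++ [true]) δ
        - mixExp eos p q x (List.replicate (m + 1) false) δ
      = ∑ w : Fin m → Ω, ∑ c, pref eos (fun _ pre => q x pre) (List.ofFn w)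
          * (p x (List.ofFn w) c - q x (List.ofFn w) c) * δ (List.ofFn w ++ [c]) := by
    intro δ hδ
    unfold mixExp
    rw [show (List.replicate m false ++ [true]).length = m + 1 by simp,
      show (List.replicate (m + 1) false).length = m + 1 by simp,
      seqExp_single eos _ m δ hδ, seqExp_single eos _ m δ hδ, ← Finset.sum_sub_distrib]
    refine Finset.sum_congr rfl fun w _ => ?_
    rw [← Finset.sum_sub_distrib]
    refine Finset.sum_congr rfl fun c _ => ?_
    rw [hP w c, hQ w c]
    ring
  -- the value of E_t
  have hV : Eterm eos p q x T (m + 1)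
      = ∑ w : Fin m → Ω, pref eos (fun _ pre => q x pre) (List.ofFn w)
          * tvd (p x (List.ofFn w)) (q x (List.ofFn w)) := by
    unfold Eterm modelExp
    rw [← marginal eos (fun _ pre => q x pre) hmsq T (T - (m + 1)) m (by omega)
      (fun u => tvd (p x u) (q x u))]
    unfold seqExp
    refine Finset.sum_congr rfl fun n hn => Finset.sum_congr rfl fun v _ => ?_
    congr 1
    simp [stepLoss, List.length_ofFn]
  rw [hV]
  refine (IsGreatest.csSup_eq ?_).symm
  constructor
  · -- the supremum is attained
    refine ⟨fun y => if y.length = m + 1 then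
        (if 0 ≤ pref eos (fun _ pre => q x pre) y.dropLast
            * (p x y.dropLast (y.getLastD eos) - q x y.dropLast (y.getLastD eos))
          then (1 / 2 : ℝ) else -(1 / 2)) else 0, ?_, ?_, ?_⟩
    · intro y
      rw [Set.mem_Icc]
      dsimp only
      split_ifs <;> norm_num
    · intro y hy
      simp only [if_neg hy]
    · rw [hmixdiff _ (fun y hy => by simp only [if_neg hy])]
      refine Finset.sum_congr rfl fun w _ => ?_
      have hu : (List.ofFn w).length = m := List.length_ofFn
      have hterm : ∀ c : Ω,
          pref eos (fun _ pre => q x pre) (List.ofFn w)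
              * (p x (List.ofFn w) c - q x (List.ofFn w) c)
              * (if (List.ofFn w ++ [c]).length = m + 1 then
                  (if 0 ≤ pref eos (fun _ pre => q x pre) (List.ofFn w ++ [c]).dropLast
                      * (p x (List.ofFn w ++ [c]).dropLast ((List.ofFn w ++ [c]).getLastD eos)
                        - q x (List.ofFn w ++ [c]).dropLast ((List.ofFn w ++ [c]).getLastD eos))
                    then (1 / 2 : ℝ) else -(1 / 2)) else 0)
          = pref eos (fun _ pre => q x pre) (List.ofFn w)
              * ((1 / 2) * |p x (List.ofFn w) c - q x (List.ofFn w) c|) := by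
        intro c
        rw [if_pos (by simp [hu]), List.dropLast_concat, List.getLastD_concat]
        set a := pref eos (fun _ pre => q x pre) (List.ofFn w) with ha
        set b := p x (List.ofFn w) c - q x (List.ofFn w) c with hb
        have habs : |a * b| = a * |b| := by
          rw [abs_mul, abs_of_nonneg (hpref _)]
        split_ifs with h0
        · rw [abs_of_nonneg h0] at habs
          linear_combination (1 / 2) * habs
        · rw [abs_of_neg (lt_of_not_ge h0)] at habs
          linear_combination (1 / 2) * habs
      rw [Finset.sum_congr rfl (fun c _ => hterm c), ← Finset.mul_sum, ← Finset.mul_sum]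
      rfl
  · -- upper bound
    rintro r ⟨δ, hb, h0, rfl⟩
    rw [hmixdiff δ h0]
    refine Finset.sum_le_sum fun w _ => ?_
    have hu : (List.ofFn w).length = m := List.length_ofFn
    calc (∑ c, pref eos (fun _ pre => q x pre) (List.ofFn w)
            * (p x (List.ofFn w) c - q x (List.ofFn w) c) * δ (List.ofFn w ++ [c]))
        ≤ ∑ c, pref eos (fun _ pre => q x pre) (List.ofFn w)
            * ((1 / 2) * |p x (List.ofFn w) c - q x (List.ofFn w) c|) := by
          refine Finset.sum_le_sum fun c _ => ?_
          have habs : |δ (List.ofFn w ++ [c])| ≤ 1 / 2 :=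
            abs_le.mpr ⟨(hb _).1, (hb _).2⟩
          calc pref eos (fun _ pre => q x pre) (List.ofFn w)
                  * (p x (List.ofFn w) c - q x (List.ofFn w) c) * δ (List.ofFn w ++ [c])
              ≤ |pref eos (fun _ pre => q x pre) (List.ofFn w)
                  * (p x (List.ofFn w) c - q x (List.ofFn w) c) * δ (List.ofFn w ++ [c])| :=
                le_abs_self _
            _ = pref eos (fun _ pre => q x pre) (List.ofFn w)
                  * |p x (List.ofFn w) c - q x (List.ofFn w) c| * |δ (List.ofFn w ++ [c])| := by
                rw [abs_mul, abs_mul, abs_of_nonneg (hpref _)]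
            _ ≤ pref eos (fun _ pre => q x pre) (List.ofFn w)
                  * |p x (List.ofFn w) c - q x (List.ofFn w) c| * (1 / 2) := by
                exact mul_le_mul_of_nonneg_left habs
                  (mul_nonneg (hpref _) (abs_nonneg _))
            _ = pref eos (fun _ pre => q x pre) (List.ofFn w)
                  * ((1 / 2) * |p x (List.ofFn w) c - q x (List.ofFn w) c|) := by ring
      _ = pref eos (fun _ pre => q x pre) (List.ofFn w)
            * tvd (p x (List.ofFn w)) (q x (List.ofFn w)) := by
          rw [← Finset.mul_sum, ← Finset.mul_sum]
          rfl
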